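/- Let n be a positive integer, let x_1, …, x_n be real numbers satisfying x_1 > -x_2 > x_3 > … > (-1)^{n+1} x_n > 0, and for 0 ≤ r ≤ k ≤ n let s_r^{(k)} = Σ_{1 ≤ i_1 < … < i_r ≤ k} x_{i_1} ⋯ x_{i_r} with s_0^{(k)} = 1. Fix r with 2 ≤ r ≤ n and suppose that for some ε ∈ {+1, −1}, ε · s_{r-2}^{(j)} > 0 holds for every j with r−2 ≤ j ≤ n (when r = 2 this holds with ε = +1 since s_0^{(j)} = 1). Then for every k with r ≤ k ≤ n one has ε · s_r^{(k)} < 0; that is, each s_r^{(k)} is nonzero with sign opposite to the common sign of the s_{r-2}^{(j)}. -/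

import Mathlib

open Finset

noncomputable def Saux (x : ℕ → ℝ) (r k : ℕ) : ℝ :=
  ∑ t ∈ (Icc 1 k).powersetCard r, ∏ i ∈ t, x i

lemma Saux_of_lt (x : ℕ → ℝ) {r k : ℕ} (h : k < r) : Saux x r k = 0 := by
  unfold Saux
  rw [Finset.powersetCard_eq_empty.2 (by simpa using h), Finset.sum_empty]

lemma Saux_succ (x : ℕ → ℝ) (r k : ℕ) :
    Saux x (r + 1) (k + 1) = Saux x (r + 1) k + x (k + 1) * Saux x r k := by
  unfold Saux
  have h1 : Icc 1 (k + 1) = insert (k + 1) (Icc 1 k) := by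
    ext m; simp; omega
  have h2 : (k + 1) ∉ Icc 1 k := by simp
  rw [h1, Finset.powersetCard_succ_insert h2, Finset.sum_union, Finset.sum_image,
    Finset.mul_sum]
  · congr 1
    refine Finset.sum_congr rfl fun t ht => ?_
    rw [Finset.prod_insert]
    intro hmem
    exact h2 ((Finset.mem_powersetCard.1 ht).1 hmem)
  · intro a ha b hb hab
    have ha' : (k+1) ∉ a := fun h => h2 ((Finset.mem_powersetCard.1 ha).1 h)
    have hb' : (k+1) ∉ b := fun h => h2 ((Finset.mem_powersetCard.1 hb).1 h)
    have := congrArg (fun s => Finset.erase s (k+1)) hab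
    simpa [Finset.erase_insert ha', Finset.erase_insert hb'] using this
  · rw [Finset.disjoint_right]
    intro a ha ha2
    simp only [Finset.mem_image] at ha
    obtain ⟨b, hb, rfl⟩ := ha
    exact h2 ((Finset.mem_powersetCard.1 ha2).1 (Finset.mem_insert_self _ _))

lemma Saux_zero_k (x : ℕ → ℝ) (r : ℕ) : Saux x (r + 1) 0 = 0 :=
  Saux_of_lt x (Nat.succ_pos r)

lemma Saux_max (x : ℕ → ℝ) (r k : ℕ) :
    Saux x (r + 1) k = ∑ m ∈ Icc 1 k, x m * Saux x r (m - 1) := by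
  induction k with
  | zero => simp [Saux_zero_k]
  | succ k ih =>
    rw [Saux_succ, ih, Finset.sum_Icc_succ_top (Nat.le_add_left 1 k)]
    simp

lemma Saux_double (x : ℕ → ℝ) (r k : ℕ) :
    Saux x (r + 2) k =
      ∑ j ∈ Icc 1 k, (x j * Saux x r (j - 1)) * ∑ m ∈ Icc (j + 1) k, x m := by
  rw [show r + 2 = (r + 1) + 1 from rfl, Saux_max]
  have step : ∀ m ∈ Icc 1 k, x m * Saux x (r+1) (m-1)
      = ∑ j ∈ Icc 1 k, if j < m then (x j * Saux x r (j-1)) * x m else 0 := by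
    intro m hm
    simp only [Finset.mem_Icc] at hm
    rw [Saux_max, Finset.mul_sum, Finset.sum_ite, Finset.sum_const_zero, add_zero]
    have hfil : (Icc 1 k).filter (fun j => j < m) = Icc 1 (m - 1) := by
      ext j; simp only [Finset.mem_filter, Finset.mem_Icc]; omega
    rw [hfil]
    exact Finset.sum_congr rfl fun j _ => by ring
  rw [Finset.sum_congr rfl step, Finset.sum_comm]
  refine Finset.sum_congr rfl fun j hj => ?_
  simp only [Finset.mem_Icc] at hj
  rw [Finset.sum_ite, Finset.sum_const_zero, add_zero]
  have hfil : (Icc 1 k).filter (fun m => j < m) = Icc (j + 1) k := by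
    ext m; simp only [Finset.mem_filter, Finset.mem_Icc]; omega
  rw [hfil, Finset.mul_sum]

lemma tail_sign (x : ℕ → ℝ) (n : ℕ)
    (hpos : ∀ i, 1 ≤ i → i ≤ n → 0 < (-1 : ℝ) ^ (i + 1) * x i)
    (hdec : ∀ i, 1 ≤ i → i + 1 ≤ n →
      (-1 : ℝ) ^ (i + 2) * x (i + 1) < (-1 : ℝ) ^ (i + 1) * x i)
    (k : ℕ) (hkn : k ≤ n) :
    ∀ d j, 1 ≤ j → j + d = k →
      0 < (-1 : ℝ) ^ (j + 1) * ∑ m ∈ Icc j k, x m ∧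
      (-1 : ℝ) ^ (j + 1) * ∑ m ∈ Icc j k, x m ≤ (-1 : ℝ) ^ (j + 1) * x j := by
  intro d
  induction d with
  | zero =>
    intro j hj hjk
    subst hjk
    simp only [Nat.add_zero, Finset.Icc_self, Finset.sum_singleton]
    exact ⟨hpos j hj (by omega), le_refl _⟩
  | succ d ih =>
    intro j hj hjk
    have hsplit : Icc j k = (Ioc j k).cons j Finset.left_notMem_Ioc :=
      Finset.Icc_eq_cons_Ioc (by omega)
    have hIoc : Ioc j k = Icc (j + 1) k := by ext m; simp
    obtain ⟨ih1, ih2⟩ := ih (j + 1) (by omega) (by omega)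
    have hd := hdec j hj (by omega)
    rw [hsplit, Finset.sum_cons, hIoc]
    set T : ℝ := ∑ m ∈ Icc (j + 1) k, x m with hT
    have hpow : (-1 : ℝ) ^ (j + 1 + 1) = -(-1 : ℝ) ^ (j + 1) := by
      rw [pow_succ]; ring
    rw [show j + 2 = j + 1 + 1 from rfl, hpow] at hd
    rw [hpow] at ih1 ih2
    constructor
    · have e : (-1:ℝ)^(j+1) * (x j + T) = (-1:ℝ)^(j+1) * x j + (-1:ℝ)^(j+1) * T := by ring
      rw [e]; linarith
    · have e : (-1:ℝ)^(j+1) * (x j + T) = (-1:ℝ)^(j+1) * x j + (-1:ℝ)^(j+1) * T := by ring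
      rw [e]; linarith

lemma prod_tail_neg (x : ℕ → ℝ) (n : ℕ)
    (hpos : ∀ i, 1 ≤ i → i ≤ n → 0 < (-1 : ℝ) ^ (i + 1) * x i)
    (hdec : ∀ i, 1 ≤ i → i + 1 ≤ n →
      (-1 : ℝ) ^ (i + 2) * x (i + 1) < (-1 : ℝ) ^ (i + 1) * x i)
    (k : ℕ) (hkn : k ≤ n) (j : ℕ) (h1 : 1 ≤ j) (h2 : j < k) :
    x j * ∑ m ∈ Icc (j + 1) k, x m < 0 := by
  have hx := hpos j h1 (by omega)
  have hT := (tail_sign x n hpos hdec k hkn (k - (j + 1)) (j + 1) (by omega) (by omega)).1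
  set T : ℝ := ∑ m ∈ Icc (j + 1) k, x m with hTdef
  have h3 : 0 < ((-1 : ℝ) ^ (j + 1) * x j) * ((-1 : ℝ) ^ (j + 1 + 1) * T) := mul_pos hx hT
  have hsq : ((-1 : ℝ) ^ (j + 1)) * ((-1 : ℝ) ^ (j + 1)) = 1 := by
    rw [← pow_add]
    exact Even.neg_one_pow ⟨j + 1, by ring⟩
  have h4 : ((-1 : ℝ) ^ (j + 1) * x j) * ((-1 : ℝ) ^ (j + 1 + 1) * T) = -(x j * T) := by
    rw [pow_succ]
    linear_combination (-(x j * T)) * hsq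
  linarith [h3.trans_eq h4]

/-- **Sign-flipping inductive step of Appendix C of the paper.** Suppose
`x₁ > -x₂ > x₃ > ⋯ > (-1)^{n+1} xₙ > 0`, let
`s_r^{(k)} = Σ_{1 ≤ i₁ < ⋯ < i_r ≤ k} x_{i₁} ⋯ x_{i_r}` (so `s₀^{(k)} = 1`),
fix `2 ≤ r ≤ n`, and suppose `ε ∈ {+1, -1}` is such that `ε · s_{r-2}^{(j)} > 0`
for every `r - 2 ≤ j ≤ n`. Then `ε · s_r^{(k)} < 0` for every `r ≤ k ≤ n`. -/
theorem esymm_sign_flip_step (n : ℕ) (hn : 1 ≤ n) (x : ℕ → ℝ)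
    (hpos : ∀ i, 1 ≤ i → i ≤ n → 0 < (-1 : ℝ) ^ (i + 1) * x i)
    (hdec : ∀ i, 1 ≤ i → i + 1 ≤ n →
      (-1 : ℝ) ^ (i + 2) * x (i + 1) < (-1 : ℝ) ^ (i + 1) * x i)
    (r : ℕ) (hr2 : 2 ≤ r) (hrn : r ≤ n)
    (ε : ℝ) (hε : ε = 1 ∨ ε = -1)
    (hind : ∀ j, r - 2 ≤ j → j ≤ n →
      0 < ε * ∑ t ∈ (Icc 1 j).powersetCard (r - 2), ∏ i ∈ t, x i)
    (k : ℕ) (hrk : r ≤ k) (hkn : k ≤ n) :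
    ε * ∑ t ∈ (Icc 1 k).powersetCard r, ∏ i ∈ t, x i < 0 := by
  obtain ⟨r', rfl⟩ : ∃ r', r = r' + 2 := ⟨r - 2, by omega⟩
  have hind' : ∀ j, r' ≤ j → j ≤ n → 0 < ε * Saux x r' j := by
    intro j hj1 hj2
    have := hind j (by omega) hj2
    simpa [Saux] using this
  have hgoal : ε * Saux x (r' + 2) k < 0 := by
    rw [Saux_double, Finset.mul_sum]
    have hnonpos : ∀ j ∈ Icc 1 k,
        ε * ((x j * Saux x r' (j - 1)) * ∑ m ∈ Icc (j + 1) k, x m) ≤ 0 := by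
      intro j hj
      simp only [Finset.mem_Icc] at hj
      rcases lt_or_ge j (r' + 1) with h | h
      · rw [Saux_of_lt x (by omega : j - 1 < r')]
        simp
      · rcases eq_or_lt_of_le hj.2 with h' | h'
        · rw [h', Finset.Icc_eq_empty (by omega), Finset.sum_empty]
          simp
        · have hS := hind' (j - 1) (by omega) (by omega)
          have hP := prod_tail_neg x n hpos hdec k hkn j hj.1 h'
          have e : ε * ((x j * Saux x r' (j - 1)) * ∑ m ∈ Icc (j + 1) k, x m)
              = (ε * Saux x r' (j - 1)) * (x j * ∑ m ∈ Icc (j + 1) k, x m) := by ring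
          rw [e]
          exact le_of_lt (mul_neg_of_pos_of_neg hS hP)
    have hstrict : ∃ j ∈ Icc 1 k,
        ε * ((x j * Saux x r' (j - 1)) * ∑ m ∈ Icc (j + 1) k, x m) < 0 := by
      refine ⟨r' + 1, by simp only [Finset.mem_Icc]; omega, ?_⟩
      have hS := hind' (r' + 1 - 1) (by omega) (by omega)
      have hP := prod_tail_neg x n hpos hdec k hkn (r' + 1) (by omega) (by omega)
      have e : ε * ((x (r' + 1) * Saux x r' (r' + 1 - 1)) * ∑ m ∈ Icc (r' + 1 + 1) k, x m)
          = (ε * Saux x r' (r' + 1 - 1)) * (x (r' + 1) * ∑ m ∈ Icc (r' + 1 + 1) k, x m) := by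
        ring
      rw [e]
      exact mul_neg_of_pos_of_neg hS hP
    calc (∑ j ∈ Icc 1 k, ε * ((x j * Saux x r' (j - 1)) * ∑ m ∈ Icc (j + 1) k, x m))
        < ∑ _j ∈ Icc 1 k, (0 : ℝ) := Finset.sum_lt_sum hnonpos hstrict
      _ = 0 := by simp
  simpa [Saux] using hgoal
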